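/- A quantum channel D on d-dimensional systems satisfies ⟨i|D(ρ)|i⟩ = ⟨i|ρ|i⟩ for all density matrices ρ and all basis states |i⟩ if and only if there exists a correlation matrix C such that D(X) = X ∘ C for all X. -/

import Mathlib

open Matrix
open scoped Kronecker ComplexOrder

noncomputable section


/-- In a PSD complex matrix, a zero diagonal entry kills its whole row. -/
lemma psd_row_zero {n : Type*} [Fintype n] [DecidableEq n] {M : Matrix n n ℂ}
    (hM : M.PosSemidef) {p : n} (hp : M p p = 0) (q : n) : M p q = 0 := by
  by_cases hpq : p = q
  · subst hpq; exact hp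
  set c := M p q with hc
  have key : ∀ s : ℝ, 0 ≤ (-2 * s * Complex.normSq c + M q q : ℂ) := by
    intro s
    have h0 := hM.dotProduct_mulVec_nonneg (Pi.single p (-(s:ℂ) * c) + Pi.single q 1)
    have hqp : M q p = star c := by rw [hc, ← hM.1.apply]
    have hexp : star (Pi.single p (-(s:ℂ) * c) + Pi.single q 1) ⬝ᵥ
        (M *ᵥ (Pi.single p (-(s:ℂ) * c) + Pi.single q 1)) =
        (-2 * s * Complex.normSq c + M q q : ℂ) := by
      have hstar : star (Pi.single p (-(s:ℂ) * c) + Pi.single q (1:ℂ)) =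
          (Pi.single p (star (-(s:ℂ) * c)) : n → ℂ) + Pi.single q (1:ℂ) := by
        funext r
        by_cases hr : r = p <;> by_cases hr' : r = q <;>
          simp_all [Pi.single_apply]
      rw [hstar, mulVec_add, mulVec_single, mulVec_single]
      simp only [add_dotProduct, dotProduct_add, single_dotProduct]
      simp only [Pi.smul_apply, op_smul_eq_mul, col_apply, hp, hqp, mul_one, zero_mul]
      rw [Complex.star_def, ← hc]
      rw [show (starRingEnd ℂ) (-(s:ℂ) * c) = -(s:ℂ) * (starRingEnd ℂ) c by
        simp [Complex.conj_ofReal]]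
      have hcc : ((starRingEnd ℂ) c) * c = (Complex.normSq c : ℂ) := by
        rw [← Complex.normSq_eq_conj_mul_self]
      linear_combination (-2*(s:ℂ)) * hcc
    rwa [hexp] at h0
  -- extract real part inequality
  by_contra hne
  have hpos : 0 < Complex.normSq c := Complex.normSq_pos.2 hne
  have hre : ∀ s : ℝ, 0 ≤ -2 * s * Complex.normSq c + (M q q).re := by
    intro s
    have := (Complex.nonneg_iff.1 (key s)).1
    simpa using this
  have h2 : (0:ℝ) < 2 * Complex.normSq c := by linarith
  have := hre (((M q q).re + 1) / (2 * Complex.normSq c))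
  have heq : -2 * (((M q q).re + 1) / (2 * Complex.normSq c)) * Complex.normSq c
      = -((M q q).re + 1) := by field_simp
  rw [heq] at this
  linarith


/-- The Schur-product (Hadamard-product) superoperator `X ↦ X ∘ C`. -/
def schurMap {d : ℕ} (C : Matrix (Fin d) (Fin d) ℂ) :
    Matrix (Fin d) (Fin d) ℂ →ₗ[ℂ] Matrix (Fin d) (Fin d) ℂ where
  toFun X := X.hadamard C
  map_add' X Y := by ext i j; simp [Matrix.hadamard]; ring
  map_smul' c X := by ext i j; simp [Matrix.hadamard]; ring

/-- The extension `E ⊗ I_n` of a superoperator, applied to a bipartite matrix. -/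
def tensExt {d : ℕ} (E : Matrix (Fin d) (Fin d) ℂ →ₗ[ℂ] Matrix (Fin d) (Fin d) ℂ) (n : ℕ)
    (ρ : Matrix (Fin d × Fin n) (Fin d × Fin n) ℂ) :
    Matrix (Fin d × Fin n) (Fin d × Fin n) ℂ :=
  Matrix.of fun p q => ∑ i, ∑ j, (E (Matrix.single i j 1)) p.1 q.1 * ρ (i, p.2) (j, q.2)

/-- Complete positivity: every extension `E ⊗ I_n` preserves positive semidefiniteness. -/
def IsCP {d : ℕ} (E : Matrix (Fin d) (Fin d) ℂ →ₗ[ℂ] Matrix (Fin d) (Fin d) ℂ) : Prop :=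
  ∀ (n : ℕ) (ρ : Matrix (Fin d × Fin n) (Fin d × Fin n) ℂ),
    ρ.PosSemidef → (tensExt E n ρ).PosSemidef

/-- Trace preservation. -/
def IsTP {d : ℕ} (E : Matrix (Fin d) (Fin d) ℂ →ₗ[ℂ] Matrix (Fin d) (Fin d) ℂ) : Prop :=
  ∀ X, (E X).trace = X.trace

/-- Quantum channel: completely positive and trace-preserving. -/
def IsCPTP {d : ℕ} (E : Matrix (Fin d) (Fin d) ℂ →ₗ[ℂ] Matrix (Fin d) (Fin d) ℂ) : Prop :=
  IsCP E ∧ IsTP E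

/-- The Jamiołkowski matrix `J(E) = (E ⊗ I)(|Ψ⟩⟨Ψ|)`, with entries
`J(E)_{(i,k),(j,l)} = E(|k⟩⟨l|)_{i j} / d`. -/
def jam {d : ℕ} (E : Matrix (Fin d) (Fin d) ℂ →ₗ[ℂ] Matrix (Fin d) (Fin d) ℂ) :
    Matrix (Fin d × Fin d) (Fin d × Fin d) ℂ :=
  Matrix.of fun p q => (E (Matrix.single p.2 q.2 1)) p.1 q.1 / d

/-- Controlled unitary `U = Σ_i |i⟩⟨i| ⊗ U_i`. -/
def ctrl {d n : ℕ} (Us : Fin d → Matrix (Fin n) (Fin n) ℂ) :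
    Matrix (Fin d × Fin n) (Fin d × Fin n) ℂ :=
  Matrix.of fun p q => (if p.1 = q.1 then (1 : ℂ) else 0) * (Us p.1) p.2 q.2


/-- a quantum channel preserves all occupations in the distinguished
basis iff it is a Schur-product channel with a correlation matrix. -/
theorem stmt1 (d : ℕ) (D : Matrix (Fin d) (Fin d) ℂ →ₗ[ℂ] Matrix (Fin d) (Fin d) ℂ)
    (hD : IsCPTP D) :
    (∀ ρ : Matrix (Fin d) (Fin d) ℂ, ρ.PosSemidef → ρ.trace = 1 →
        ∀ i, (D ρ) i i = ρ i i) ↔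
      ∃ C : Matrix (Fin d) (Fin d) ℂ, C.PosSemidef ∧ (∀ i, C i i = 1) ∧
        ∀ X, D X = X.hadamard C := by
  constructor
  · intro h
    set ρ' : Matrix (Fin d × Fin d) (Fin d × Fin d) ℂ :=
      Matrix.of fun p q => (if p.1 = p.2 then (1:ℂ) else 0) * (if q.1 = q.2 then (1:ℂ) else 0)
      with hρ'def
    have hρ' : ρ'.PosSemidef := by
      have h1 := Matrix.posSemidef_conjTranspose_mul_self
        (Matrix.of fun (_ : Fin 1) (p : Fin d × Fin d) => if p.1 = p.2 then (1:ℂ) else 0)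
      have heq : ρ' = (Matrix.of fun (_ : Fin 1) (p : Fin d × Fin d) =>
          if p.1 = p.2 then (1:ℂ) else 0)ᴴ *
          (Matrix.of fun (_ : Fin 1) (p : Fin d × Fin d) => if p.1 = p.2 then (1:ℂ) else 0) := by
        ext p q
        simp [hρ'def, Matrix.mul_apply, Matrix.conjTranspose_apply, apply_ite (star : ℂ → ℂ)]
      rw [heq]; exact h1
    have hMpsd : (tensExt D d ρ').PosSemidef := hD.1 d ρ' hρ'
    have hMval : ∀ i k j l : Fin d, (tensExt D d ρ') (i,k) (j,l) = D (Matrix.single k l 1) i j := by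
      intro i k j l
      show (∑ a, ∑ b, (D (Matrix.single a b 1)) i j * ρ' (a,k) (b,l)) = _
      simp [hρ'def, mul_ite, ite_mul, Finset.sum_ite_eq, Finset.sum_ite_eq']
    have hEkk : ∀ k : Fin d, (Matrix.single k k (1:ℂ)).PosSemidef := by
      intro k
      have h1 := Matrix.posSemidef_conjTranspose_mul_self
        (Matrix.of fun (_ : Fin 1) (j : Fin d) => if j = k then (1:ℂ) else 0)
      have heq : Matrix.single k k (1:ℂ) =
          (Matrix.of fun (_ : Fin 1) (j : Fin d) => if j = k then (1:ℂ) else 0)ᴴ *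
          (Matrix.of fun (_ : Fin 1) (j : Fin d) => if j = k then (1:ℂ) else 0) := by
        ext a b
        simp [Matrix.mul_apply, Matrix.conjTranspose_apply, apply_ite (star : ℂ → ℂ),
          Matrix.single, and_comm, eq_comm]
        by_cases hka : k = a <;> by_cases hkb : k = b <;> simp_all
      rw [heq]; exact h1
    have hEtr : ∀ k : Fin d, (Matrix.single k k (1:ℂ)).trace = 1 := by
      intro k
      simp [Matrix.trace, Matrix.diag, Matrix.single]
    have hdiag1 : ∀ (k i : Fin d), (D (Matrix.single k k 1)) i i = Matrix.single k k 1 i i :=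
      fun k i => h _ (hEkk k) (hEtr k) i
    have hzero_row : ∀ (i k : Fin d), i ≠ k → ∀ j l, D (Matrix.single k l 1) i j = 0 := by
      intro i k hik j l
      have hdM : (tensExt D d ρ') (i,k) (i,k) = 0 := by
        rw [hMval, hdiag1]
        simp [Matrix.single, (Ne.symm hik : k ≠ i)]
      have h2 := psd_row_zero hMpsd hdM (j,l)
      rwa [hMval] at h2
    have hzero_col : ∀ (i k j l : Fin d), j ≠ l → D (Matrix.single k l 1) i j = 0 := by
      intro i k j l hjl
      have hdM : (tensExt D d ρ') (j,l) (j,l) = 0 := by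
        rw [hMval, hdiag1]
        simp [Matrix.single, (Ne.symm hjl : l ≠ j)]
      have h1 := psd_row_zero hMpsd hdM (i,k)
      rw [← hMval, ← hMpsd.1.apply, h1, star_zero]
    refine ⟨Matrix.of fun k l => (D (Matrix.single k l 1)) k l, ?_, ?_, ?_⟩
    · have heq : (Matrix.of fun k l => (D (Matrix.single k l 1)) k l) =
          (tensExt D d ρ').submatrix (fun k => (k,k)) (fun k => (k,k)) := by
        ext k l
        simp [Matrix.submatrix_apply, hMval]
      rw [heq]
      exact hMpsd.submatrix _
    · intro i
      simp only [Matrix.of_apply]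
      rw [hdiag1]
      simp [Matrix.single]
    · intro X
      have expand : D X = ∑ k, ∑ l, X k l • D (Matrix.single k l 1) := by
        conv_lhs => rw [matrix_eq_sum_single X]
        rw [map_sum]
        refine Finset.sum_congr rfl fun k _ => ?_
        rw [map_sum]
        refine Finset.sum_congr rfl fun l _ => ?_
        rw [← LinearMap.map_smul]
        congr 1
        rw [smul_single]
        simp
      ext i j
      rw [expand]
      simp only [Matrix.sum_apply, Matrix.smul_apply, smul_eq_mul, Matrix.hadamard_apply,
        Matrix.of_apply]
      rw [Finset.sum_eq_single i
        (fun k _ hk => Finset.sum_eq_zero fun l _ => by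
          rw [hzero_row i k (Ne.symm hk), mul_zero])
        (fun hni => absurd (Finset.mem_univ i) hni)]
      rw [Finset.sum_eq_single j
        (fun l _ hl => by rw [hzero_col i i j l (Ne.symm hl), mul_zero])
        (fun hnj => absurd (Finset.mem_univ j) hnj)]
  · rintro ⟨C, hC, hCdiag, hDX⟩ ρ hρ hρtr i
    rw [hDX]
    simp [Matrix.hadamard_apply, hCdiag i]


end
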